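/- Assume ε ∈ EuclideanSpace ℝ (Fin n) has εᵢ ∈ {−1,1} for all i and C.mulVec ε = 0. Then for every k, every index sequence j : Fin k → Fin n, and every starting vector y₀, the iterate satisfies the deterministic lower bound ‖y_k(j, y₀)‖² ≥ ⟪y₀, ε⟫²/n. -/

import Mathlib

open scoped RealInnerProductSpace

/-- The `j`-th row of `C` as a vector in Euclidean space. -/
noncomputable def row {n : ℕ} (C : Matrix (Fin n) (Fin n) ℝ) (j : Fin n) :
    EuclideanSpace ℝ (Fin n) := (WithLp.equiv 2 (Fin n → ℝ)).symm (C j)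

/-- Matrix-vector multiplication, landing in Euclidean space. -/
noncomputable def mulVecE {n : ℕ} (C : Matrix (Fin n) (Fin n) ℝ)
    (v : EuclideanSpace ℝ (Fin n)) : EuclideanSpace ℝ (Fin n) :=
  (WithLp.equiv 2 (Fin n → ℝ)).symm (C.mulVec ((WithLp.equiv 2 (Fin n → ℝ)) v))

/-- Squared Frobenius norm. -/
noncomputable def frobSq {n : ℕ} (C : Matrix (Fin n) (Fin n) ℝ) : ℝ :=
  ∑ i, ∑ j, (C i j) ^ 2

open scoped Classical in
/-- Kaczmarz update for row `j`. -/
noncomputable def kacz {n : ℕ} (C : Matrix (Fin n) (Fin n) ℝ) (j : Fin n)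
    (y : EuclideanSpace ℝ (Fin n)) : EuclideanSpace ℝ (Fin n) :=
  if row C j = 0 then y
  else y - ((⟪y, row C j⟫) / ‖row C j‖ ^ 2) • row C j

/-- Kaczmarz iteration along an index sequence `j : Fin k → Fin n`,
applying `T_{j 0}` first and `T_{j (k-1)}` last. -/
noncomputable def kaczIter {n : ℕ} (C : Matrix (Fin n) (Fin n) ℝ) :
    (k : ℕ) → (Fin k → Fin n) → EuclideanSpace ℝ (Fin n) → EuclideanSpace ℝ (Fin n)
  | 0, _, y => y
  | (k + 1), j, y => kacz C (j (Fin.last k)) (kaczIter C k (fun i => j i.castSucc) y)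


lemma inner_row_eps {n : ℕ} (C : Matrix (Fin n) (Fin n) ℝ)
    (ε : EuclideanSpace ℝ (Fin n)) (hε : mulVecE C ε = 0) (i : Fin n) :
    ⟪row C i, ε⟫ = 0 := by
  have h : C.mulVec ((WithLp.equiv 2 (Fin n → ℝ)) ε) = 0 := by
    have := congrArg (WithLp.equiv 2 (Fin n → ℝ)) hε
    simpa [mulVecE] using this
  have h' : (∑ l, C i l * ε l) = 0 := by
    have := congrFun h i
    simpa [Matrix.mulVec, dotProduct] using this
  simpa [row, PiLp.inner_apply, mul_comm] using h'

lemma inner_kacz_eps {n : ℕ} (C : Matrix (Fin n) (Fin n) ℝ)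
    (ε : EuclideanSpace ℝ (Fin n)) (hε : mulVecE C ε = 0) (i : Fin n)
    (y : EuclideanSpace ℝ (Fin n)) : ⟪kacz C i y, ε⟫ = ⟪y, ε⟫ := by
  classical
  unfold kacz
  split
  · rfl
  · rw [inner_sub_left, inner_smul_left]
    simp [inner_row_eps C ε hε i]

lemma inner_kaczIter_eps {n : ℕ} (C : Matrix (Fin n) (Fin n) ℝ)
    (ε : EuclideanSpace ℝ (Fin n)) (hε : mulVecE C ε = 0) :
    ∀ (k : ℕ) (j : Fin k → Fin n) (y : EuclideanSpace ℝ (Fin n)),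
      ⟪kaczIter C k j y, ε⟫ = ⟪y, ε⟫
  | 0, _, y => rfl
  | (k + 1), j, y => by
    rw [kaczIter, inner_kacz_eps C ε hε, inner_kaczIter_eps C ε hε]

/-- Deterministic lower bound `‖y_k‖² ≥ ⟪y₀, ε⟫² / n` for every
Kaczmarz iterate. -/
theorem kacz_iterate_sq_norm_lower_bound {n : ℕ} (hn : 0 < n)
    (C : Matrix (Fin n) (Fin n) ℝ) (hC : C ≠ 0)
    (ε : EuclideanSpace ℝ (Fin n)) (hε1 : ∀ i, ε i = -1 ∨ ε i = 1)
    (hε : mulVecE C ε = 0)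
    (k : ℕ) (j : Fin k → Fin n) (y₀ : EuclideanSpace ℝ (Fin n)) :
    ‖kaczIter C k j y₀‖ ^ 2 ≥ ⟪y₀, ε⟫ ^ 2 / n := by
  set y := kaczIter C k j y₀ with hy
  have hinv : ⟪y, ε⟫ = ⟪y₀, ε⟫ := inner_kaczIter_eps C ε hε k j y₀
  have hεnorm : ‖ε‖ ^ 2 = (n : ℝ) := by
    have : ⟪ε, ε⟫ = (n : ℝ) := by
      rw [PiLp.inner_apply]
      have h2 : ∀ i : Fin n, ε i ^ 2 = 1 := by
        intro i; rcases hε1 i with h | h <;> simp [h]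
      simp [h2]
    rw [← real_inner_self_eq_norm_sq, this]
  have hcs := real_inner_mul_inner_self_le y ε
  have : ⟪y₀, ε⟫ ^ 2 ≤ ‖y‖ ^ 2 * (n : ℝ) := by
    calc ⟪y₀, ε⟫ ^ 2 = ⟪y, ε⟫ * ⟪y, ε⟫ := by rw [hinv]; ring
      _ ≤ ⟪y, y⟫ * ⟪ε, ε⟫ := hcs
      _ = ‖y‖ ^ 2 * ‖ε‖ ^ 2 := by rw [real_inner_self_eq_norm_sq, real_inner_self_eq_norm_sq]
      _ = ‖y‖ ^ 2 * (n : ℝ) := by rw [hεnorm]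
  have hn' : (0 : ℝ) < n := by exact_mod_cast hn
  rw [ge_iff_le, div_le_iff₀ hn']
  linarith
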